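/- For the quiver variety datum of the Jordan quiver with v = n, w = 1 (Hilbert scheme of n points in ℂ²): let the weight multiset in ℝⁿ consist of ±e_i (1 ≤ i ≤ n) and e_i − e_j with multiplicity 2 (1 ≤ i ≠ j ≤ n), and let Σ̄ be the Minkowski sum of the segments [−e_i, e_i] and [2e_i − 2e_j, 2e_j − 2e_i] for i < j. Then the defining inequalities of Σ̄ are exactly |Σ_{i∈S} x_i| ≤ c_S for all nonempty subsets S ⊆ {1,…,n}, where c_S = |S| + 2|S|(n − |S|) and x_i are the coordinate functionals. -/

import Mathlib

open Finset

namespace Stmt17Aux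

variable {n : ℕ}

def pairs (n : ℕ) : Finset (Fin n × Fin n) := Finset.univ.filter (fun p => p.1 < p.2)

lemma pairs_def : pairs n = Finset.univ.filter (fun p : Fin n × Fin n => p.1 < p.2) := rfl

noncomputable def ind (S : Finset (Fin n)) (i : Fin n) : ℝ := if i ∈ S then 1 else 0

noncomputable def cS (n : ℕ) (S : Finset (Fin n)) : ℝ :=
  (S.card : ℝ) + 2 * S.card * ((n : ℝ) - S.card)

noncomputable def hval (n : ℕ) (f : Fin n → ℝ) : ℝ :=
  ∑ i, |f i| + ∑ p ∈ pairs n, 2 * |f p.1 - f p.2|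

lemma ind_sq (S : Finset (Fin n)) (i : Fin n) : ind S i ^ 2 = ind S i := by
  unfold ind; split <;> norm_num

lemma sum_ind (S : Finset (Fin n)) : ∑ i, ind S i = S.card := by
  unfold ind
  rw [Finset.sum_ite_mem, Finset.univ_inter, Finset.sum_const, nsmul_eq_mul, mul_one]

lemma sum_ind_mul (S : Finset (Fin n)) (x : Fin n → ℝ) :
    ∑ i, ind S i * x i = ∑ i ∈ S, x i := by
  unfold ind
  simp_rw [ite_mul, one_mul, zero_mul]
  rw [Finset.sum_ite_mem, Finset.univ_inter]

lemma count_pairs (S : Finset (Fin n)) :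
    ∑ p ∈ pairs n, (ind S p.1 - ind S p.2)^2 = S.card * ((n:ℝ) - S.card) := by
  have key : ∀ p : Fin n × Fin n,
      (if p.1 < p.2 then (ind S p.1 - ind S p.2)^2 else 0)
      + (if p.2 < p.1 then (ind S p.1 - ind S p.2)^2 else 0)
      = (ind S p.1 - ind S p.2)^2 := by
    intro p
    rcases lt_trichotomy p.1 p.2 with h | h | h
    · rw [if_pos h, if_neg (asymm h), add_zero]
    · rw [if_neg h.not_lt, if_neg (h ▸ h.not_lt)]; rw [h]; ring
    · rw [if_neg (asymm h), if_pos h, zero_add]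
  have swap : (∑ p : Fin n × Fin n, if p.2 < p.1 then (ind S p.1 - ind S p.2)^2 else 0)
      = ∑ p : Fin n × Fin n, if p.1 < p.2 then (ind S p.1 - ind S p.2)^2 else 0 := by
    apply Fintype.sum_equiv (Equiv.prodComm _ _)
    intro p
    simp only [Equiv.prodComm_apply, Prod.swap]
    rcases lt_or_ge p.2 p.1 with h | h
    · simp only [h, if_true]; ring
    · simp only [(show ¬ p.2 < p.1 from not_lt.mpr h), if_false]
  have total : ∑ p : Fin n × Fin n, (ind S p.1 - ind S p.2)^2
      = 2 * (S.card * ((n:ℝ) - S.card)) := by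
    rw [Fintype.sum_prod_type]
    have hexp : ∀ i j : Fin n, (ind S i - ind S j)^2
        = ind S i + ind S j - 2 * (ind S i * ind S j) := by
      intro i j
      have h1 := ind_sq S i; have h2 := ind_sq S j
      nlinarith [h1, h2]
    simp_rw [hexp]
    rw [Finset.sum_comm (f := fun i j => ind S i + ind S j - 2 * (ind S i * ind S j))]
    simp_rw [Finset.sum_sub_distrib, Finset.sum_add_distrib, Finset.sum_const,
      ← Finset.mul_sum, ← Finset.sum_mul, sum_ind, Finset.card_univ, Fintype.card_fin,
      nsmul_eq_mul]
    simp_rw [← Finset.mul_sum, sum_ind]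
    ring
  have hsplit : ∑ p ∈ pairs n, (ind S p.1 - ind S p.2)^2
      = ∑ p : Fin n × Fin n, if p.1 < p.2 then (ind S p.1 - ind S p.2)^2 else 0 := by
    rw [pairs, Finset.sum_filter]
  have h2 : (∑ p : Fin n × Fin n, if p.1 < p.2 then (ind S p.1 - ind S p.2)^2 else 0)
      + (∑ p : Fin n × Fin n, if p.2 < p.1 then (ind S p.1 - ind S p.2)^2 else 0)
      = 2 * (S.card * ((n:ℝ) - S.card)) := by
    rw [← Finset.sum_add_distrib]
    simp_rw [key]
    exact total
  rw [swap] at h2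
  rw [hsplit]
  linarith

lemma sum_e_mem (e : Fin n → (Fin n → ℝ)) (he : ∀ i, e i = Pi.single i 1)
    (S : Finset (Fin n)) (i : Fin n) : ∑ j ∈ S, e i j = ind S i := by
  rw [he i]
  simp only [Pi.single_apply]
  rw [Finset.sum_ite_eq' S i (fun _ => (1:ℝ))]
  rfl

lemma sum_coords (e : Fin n → (Fin n → ℝ)) (he : ∀ i, e i = Pi.single i 1)
    (a : Fin n → ℝ) (b : Fin n → Fin n → ℝ) (S : Finset (Fin n)) :
    ∑ j ∈ S, ((∑ i, a i • e i) + ∑ p ∈ pairs n, b p.1 p.2 • (e p.1 - e p.2)) j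
      = ∑ i ∈ S, a i + ∑ p ∈ pairs n, b p.1 p.2 * (ind S p.1 - ind S p.2) := by
  simp only [Pi.add_apply, Finset.sum_apply, Pi.smul_apply, Pi.sub_apply, smul_eq_mul]
  rw [Finset.sum_add_distrib]
  congr 1
  · rw [Finset.sum_comm]
    have h1 : ∀ i, ∑ j ∈ S, a i * e i j = a i * ind S i := by
      intro i; rw [← Finset.mul_sum, sum_e_mem e he]
    simp_rw [h1]
    unfold ind
    simp_rw [mul_ite, mul_one, mul_zero]
    rw [Finset.sum_ite_mem, Finset.univ_inter]
  · rw [Finset.sum_comm]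
    apply Finset.sum_congr rfl
    intro p _
    rw [← Finset.mul_sum, Finset.sum_sub_distrib, sum_e_mem e he, sum_e_mem e he]

lemma rep (e : Fin n → (Fin n → ℝ)) (he : ∀ i, e i = Pi.single i 1) (v : Fin n → ℝ) :
    v = ∑ i, v i • e i := by
  simp_rw [he]
  conv_lhs => rw [← Finset.univ_sum_single v]
  congr 1; funext i
  ext j
  simp [Pi.single_apply]

/-- the linear parametrization of the zonotope -/
noncomputable def L (e : Fin n → (Fin n → ℝ)) :
    ((Fin n → ℝ) × (Fin n → Fin n → ℝ)) →ₗ[ℝ] (Fin n → ℝ) where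
  toFun := fun ab => (∑ i, ab.1 i • e i)
    + ∑ p ∈ pairs n, ab.2 p.1 p.2 • (e p.1 - e p.2)
  map_add' := by
    intro x y
    simp only [Prod.fst_add, Prod.snd_add, Pi.add_apply, add_smul, Finset.sum_add_distrib]
    abel
  map_smul' := by
    intro c x
    simp only [Prod.smul_fst, Prod.smul_snd, Pi.smul_apply, smul_eq_mul, RingHom.id_apply,
      mul_smul, ← Finset.smul_sum, smul_add]

/-- the parameter box -/
def K (n : ℕ) : Set ((Fin n → ℝ) × (Fin n → Fin n → ℝ)) :=
  {ab | (∀ i, ab.1 i ∈ Set.Icc (-1 : ℝ) 1) ∧ (∀ i j, ab.2 i j ∈ Set.Icc (-2 : ℝ) 2)}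

lemma K_convex : Convex ℝ (K n) := by
  intro p hp q hq s u hs hu hsu
  constructor
  · intro i
    have := (convex_Icc (-1:ℝ) 1) (hp.1 i) (hq.1 i) hs hu hsu
    simpa using this
  · intro i j
    have := (convex_Icc (-2:ℝ) 2) (hp.2 i j) (hq.2 i j) hs hu hsu
    simpa using this

lemma K_compact : IsCompact (K n) := by
  have : K n = (Set.univ.pi fun _ : Fin n => Set.Icc (-1:ℝ) 1) ×ˢ
      (Set.univ.pi fun _ : Fin n => Set.univ.pi fun _ : Fin n => Set.Icc (-2:ℝ) 2) := by
    ext ⟨a, b⟩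
    simp only [K, Set.mem_setOf_eq, Set.mem_prod, Set.mem_pi, Set.mem_univ, true_implies,
      Set.mem_Icc]
  rw [this]
  exact (isCompact_univ_pi fun _ => isCompact_Icc).prod
    (isCompact_univ_pi fun _ => isCompact_univ_pi fun _ => isCompact_Icc)

lemma abs_decomp (t : ℝ) (ht : 0 < t) (a b : ℝ)
    (ha : t ≤ a ∨ a ≤ -t ∨ a = 0) (hb : t ≤ b ∨ b ≤ -t ∨ b = 0) :
    |a - b| = t * (((if 0 < a then (1:ℝ) else 0) - (if 0 < b then 1 else 0))^2
              + ((if a < 0 then (1:ℝ) else 0) - (if b < 0 then 1 else 0))^2)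
      + |(a - t*((if 0 < a then (1:ℝ) else 0) - (if a < 0 then 1 else 0)))
         - (b - t*((if 0 < b then (1:ℝ) else 0) - (if b < 0 then 1 else 0)))| := by
  rcases ha with ha | ha | ha <;> rcases hb with hb | hb | hb
  · rw [if_pos (show (0:ℝ) < a by linarith), if_neg (show ¬ a < (0:ℝ) by linarith),
        if_pos (show (0:ℝ) < b by linarith), if_neg (show ¬ b < (0:ℝ) by linarith)]
    rcases abs_cases (a - b) with ⟨e1, l1⟩ | ⟨e1, l1⟩ <;>
      rcases abs_cases (a - t * (1 - 0) - (b - t * (1 - 0))) with ⟨e2, l2⟩ | ⟨e2, l2⟩ <;>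
      rw [e1, e2] <;> linarith
  · rw [if_pos (show (0:ℝ) < a by linarith), if_neg (show ¬ a < (0:ℝ) by linarith),
        if_neg (show ¬ (0:ℝ) < b by linarith), if_pos (show b < (0:ℝ) by linarith)]
    rcases abs_cases (a - b) with ⟨e1, l1⟩ | ⟨e1, l1⟩ <;>
      rcases abs_cases (a - t * (1 - 0) - (b - t * (0 - 1))) with ⟨e2, l2⟩ | ⟨e2, l2⟩ <;>
      rw [e1, e2] <;> linarith
  · rw [if_pos (show (0:ℝ) < a by linarith), if_neg (show ¬ a < (0:ℝ) by linarith),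
        if_neg (show ¬ (0:ℝ) < b by linarith), if_neg (show ¬ b < (0:ℝ) by linarith)]
    rcases abs_cases (a - b) with ⟨e1, l1⟩ | ⟨e1, l1⟩ <;>
      rcases abs_cases (a - t * (1 - 0) - (b - t * (0 - 0))) with ⟨e2, l2⟩ | ⟨e2, l2⟩ <;>
      rw [e1, e2] <;> linarith
  · rw [if_neg (show ¬ (0:ℝ) < a by linarith), if_pos (show a < (0:ℝ) by linarith),
        if_pos (show (0:ℝ) < b by linarith), if_neg (show ¬ b < (0:ℝ) by linarith)]
    rcases abs_cases (a - b) with ⟨e1, l1⟩ | ⟨e1, l1⟩ <;>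
      rcases abs_cases (a - t * (0 - 1) - (b - t * (1 - 0))) with ⟨e2, l2⟩ | ⟨e2, l2⟩ <;>
      rw [e1, e2] <;> linarith
  · rw [if_neg (show ¬ (0:ℝ) < a by linarith), if_pos (show a < (0:ℝ) by linarith),
        if_neg (show ¬ (0:ℝ) < b by linarith), if_pos (show b < (0:ℝ) by linarith)]
    rcases abs_cases (a - b) with ⟨e1, l1⟩ | ⟨e1, l1⟩ <;>
      rcases abs_cases (a - t * (0 - 1) - (b - t * (0 - 1))) with ⟨e2, l2⟩ | ⟨e2, l2⟩ <;>
      rw [e1, e2] <;> linarith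
  · rw [if_neg (show ¬ (0:ℝ) < a by linarith), if_pos (show a < (0:ℝ) by linarith),
        if_neg (show ¬ (0:ℝ) < b by linarith), if_neg (show ¬ b < (0:ℝ) by linarith)]
    rcases abs_cases (a - b) with ⟨e1, l1⟩ | ⟨e1, l1⟩ <;>
      rcases abs_cases (a - t * (0 - 1) - (b - t * (0 - 0))) with ⟨e2, l2⟩ | ⟨e2, l2⟩ <;>
      rw [e1, e2] <;> linarith
  · rw [if_neg (show ¬ (0:ℝ) < a by linarith), if_neg (show ¬ a < (0:ℝ) by linarith),
        if_pos (show (0:ℝ) < b by linarith), if_neg (show ¬ b < (0:ℝ) by linarith)]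
    rcases abs_cases (a - b) with ⟨e1, l1⟩ | ⟨e1, l1⟩ <;>
      rcases abs_cases (a - t * (0 - 0) - (b - t * (1 - 0))) with ⟨e2, l2⟩ | ⟨e2, l2⟩ <;>
      rw [e1, e2] <;> linarith
  · rw [if_neg (show ¬ (0:ℝ) < a by linarith), if_neg (show ¬ a < (0:ℝ) by linarith),
        if_neg (show ¬ (0:ℝ) < b by linarith), if_pos (show b < (0:ℝ) by linarith)]
    rcases abs_cases (a - b) with ⟨e1, l1⟩ | ⟨e1, l1⟩ <;>
      rcases abs_cases (a - t * (0 - 0) - (b - t * (0 - 1))) with ⟨e2, l2⟩ | ⟨e2, l2⟩ <;>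
      rw [e1, e2] <;> linarith
  · rw [if_neg (show ¬ (0:ℝ) < a by linarith), if_neg (show ¬ a < (0:ℝ) by linarith),
        if_neg (show ¬ (0:ℝ) < b by linarith), if_neg (show ¬ b < (0:ℝ) by linarith)]
    rcases abs_cases (a - b) with ⟨e1, l1⟩ | ⟨e1, l1⟩ <;>
      rcases abs_cases (a - t * (0 - 0) - (b - t * (0 - 0))) with ⟨e2, l2⟩ | ⟨e2, l2⟩ <;>
      rw [e1, e2] <;> linarith

lemma abs_decomp_single (t : ℝ) (ht : 0 < t) (a : ℝ) (ha : t ≤ a ∨ a ≤ -t ∨ a = 0) :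
    |a| = t * ((if 0 < a then (1:ℝ) else 0) + (if a < 0 then 1 else 0))
      + |a - t*((if 0 < a then (1:ℝ) else 0) - (if a < 0 then 1 else 0))| := by
  rcases ha with ha | ha | ha
  · rw [if_pos (show (0:ℝ) < a by linarith), if_neg (show ¬ a < (0:ℝ) by linarith)]
    rcases abs_cases a with ⟨e1, l1⟩ | ⟨e1, l1⟩ <;>
      rcases abs_cases (a - t * (1 - 0)) with ⟨e2, l2⟩ | ⟨e2, l2⟩ <;>
      rw [e1, e2] <;> linarith
  · rw [if_neg (show ¬ (0:ℝ) < a by linarith), if_pos (show a < (0:ℝ) by linarith)]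
    rcases abs_cases a with ⟨e1, l1⟩ | ⟨e1, l1⟩ <;>
      rcases abs_cases (a - t * (0 - 1)) with ⟨e2, l2⟩ | ⟨e2, l2⟩ <;>
      rw [e1, e2] <;> linarith
  · rw [if_neg (show ¬ (0:ℝ) < a by linarith), if_neg (show ¬ a < (0:ℝ) by linarith)]
    rcases abs_cases a with ⟨e1, l1⟩ | ⟨e1, l1⟩ <;>
      rcases abs_cases (a - t * (0 - 0)) with ⟨e2, l2⟩ | ⟨e2, l2⟩ <;>
      rw [e1, e2] <;> linarith

lemma keylem (x : Fin n → ℝ) (hx : ∀ S : Finset (Fin n), |∑ i ∈ S, x i| ≤ cS n S)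
    (f : Fin n → ℝ) : ∑ i, f i * x i ≤ hval n f := by
  suffices H : ∀ (m : ℕ) (f : Fin n → ℝ), (univ.filter fun i => f i ≠ 0).card ≤ m →
      ∑ i, f i * x i ≤ hval n f from H _ f le_rfl
  intro m
  induction m with
  | zero =>
    intro f hf
    have hz : ∀ i, f i = 0 := by
      intro i; by_contra h
      have hi : i ∈ univ.filter fun i => f i ≠ 0 := by simp [h]
      have := Finset.card_pos.mpr ⟨i, hi⟩; omega
    simp [hval, hz]
  | succ m ih =>
    intro f hf
    by_cases hz : ∀ i, f i = 0
    · simp [hval, hz]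
    push_neg at hz
    obtain ⟨iw, hiw⟩ := hz
    have hiwZ : iw ∈ univ.filter fun i => f i ≠ 0 := by simp [hiw]
    have hZne : ((univ.filter fun i => f i ≠ 0).image fun i => |f i|).Nonempty :=
      ⟨|f iw|, Finset.mem_image_of_mem _ hiwZ⟩
    set t := ((univ.filter fun i => f i ≠ 0).image fun i => |f i|).min' hZne with htdef
    obtain ⟨j₀, hj₀Z, hj₀⟩ := Finset.mem_image.mp
      (((univ.filter fun i => f i ≠ 0).image fun i => |f i|).min'_mem hZne)
    have hj₀ne : f j₀ ≠ 0 := by simpa using hj₀Z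
    have ht_le : ∀ i, f i ≠ 0 → t ≤ |f i| := by
      intro i hi
      exact Finset.min'_le _ _ (Finset.mem_image_of_mem _ (by simp [hi]))
    have ht_pos : 0 < t := by
      rw [htdef, ← hj₀]; exact abs_pos.mpr hj₀ne
    have htri : ∀ i, t ≤ f i ∨ f i ≤ -t ∨ f i = 0 := by
      intro i
      by_cases h : f i = 0
      · exact Or.inr (Or.inr h)
      · have h2 := ht_le i h
        rcases abs_cases (f i) with ⟨e, _⟩ | ⟨e, _⟩
        · exact Or.inl (by linarith [e ▸ h2])
        · exact Or.inr (Or.inl (by linarith [e ▸ h2]))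
    set Sp := univ.filter (fun i => 0 < f i) with hSpdef
    set Sm := univ.filter (fun i => f i < 0) with hSmdef
    have hindp : ∀ i, ind Sp i = if 0 < f i then (1:ℝ) else 0 := by
      intro i; simp [ind, hSpdef]
    have hindm : ∀ i, ind Sm i = if f i < 0 then (1:ℝ) else 0 := by
      intro i; simp [ind, hSmdef]
    set g : Fin n → ℝ := fun i => f i - t * (ind Sp i - ind Sm i) with hgdef
    have hgi : ∀ i, g i = f i - t * (ind Sp i - ind Sm i) := fun i => rfl
    have habs : ∀ i, |f i| = t * (ind Sp i + ind Sm i) + |g i| := by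
      intro i
      rw [hgi, hindp, hindm]
      exact abs_decomp_single t ht_pos (f i) (htri i)
    have habs2 : ∀ p : Fin n × Fin n, |f p.1 - f p.2|
        = t * ((ind Sp p.1 - ind Sp p.2)^2 + (ind Sm p.1 - ind Sm p.2)^2)
          + |g p.1 - g p.2| := by
      intro p
      rw [hgi, hgi, hindp p.1, hindp p.2, hindm p.1, hindm p.2]
      exact abs_decomp t ht_pos (f p.1) (f p.2) (htri p.1) (htri p.2)
    have e1 : ∑ i, |f i| = t * ((Sp.card : ℝ) + Sm.card) + ∑ i, |g i| := by
      simp_rw [habs]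
      rw [Finset.sum_add_distrib, ← Finset.mul_sum, Finset.sum_add_distrib, sum_ind, sum_ind]
    have e2 : ∑ p ∈ pairs n, 2 * |f p.1 - f p.2|
        = 2 * t * ((Sp.card : ℝ) * ((n:ℝ) - Sp.card) + (Sm.card : ℝ) * ((n:ℝ) - Sm.card))
          + ∑ p ∈ pairs n, 2 * |g p.1 - g p.2| := by
      simp_rw [habs2, mul_add, ← mul_assoc]
      rw [Finset.sum_add_distrib, ← Finset.mul_sum]
      congr 1
      rw [Finset.sum_add_distrib, ← Finset.mul_sum, ← Finset.mul_sum, count_pairs, count_pairs]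
      ring
    have hfx : ∑ i, f i * x i
        = t * ((∑ i ∈ Sp, x i) - ∑ i ∈ Sm, x i) + ∑ i, g i * x i := by
      have hterm : ∀ i, f i * x i = t * (ind Sp i * x i - ind Sm i * x i) + g i * x i := by
        intro i; rw [hgi]; ring
      simp_rw [hterm]
      rw [Finset.sum_add_distrib, ← Finset.mul_sum, Finset.sum_sub_distrib,
        sum_ind_mul, sum_ind_mul]
    have hgcard : (univ.filter fun i => g i ≠ 0).card ≤ m := by
      have hsub : (univ.filter fun i => g i ≠ 0) ⊆
          (univ.filter fun i => f i ≠ 0).erase j₀ := by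
        intro i hi
        simp only [Finset.mem_filter, Finset.mem_univ, true_and] at hi
        have hfne : f i ≠ 0 := by
          intro h0
          apply hi
          rw [hgi, hindp, hindm, h0]
          norm_num
        rw [Finset.mem_erase]
        refine ⟨?_, by simp [hfne]⟩
        intro hij
        apply hi
        subst hij
        have hT : |f i| = t := hj₀.trans htdef.symm
        rw [hgi, hindp, hindm]
        rcases lt_trichotomy (f i) 0 with h | h | h
        · rw [if_neg (show ¬ 0 < f i by linarith), if_pos h]
          have h2 : -f i = t := by rw [← abs_of_neg h]; exact hT
          linarith
        · exact absurd h hfne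
        · rw [if_pos h, if_neg (show ¬ f i < 0 by linarith)]
          have h2 : f i = t := by rw [← abs_of_pos h]; exact hT
          linarith
      have h1 := Finset.card_le_card hsub
      rw [Finset.card_erase_of_mem hj₀Z] at h1
      omega
    have hih := ih g hgcard
    have hsp := abs_le.mp (hx Sp)
    have hsm := abs_le.mp (hx Sm)
    have hA : (∑ i ∈ Sp, x i) - ∑ i ∈ Sm, x i ≤ cS n Sp + cS n Sm := by
      linarith [hsp.1, hsp.2, hsm.1, hsm.2]
    have hmul := mul_le_mul_of_nonneg_left hA ht_pos.le
    have hvalf : hval n f = t * (cS n Sp + cS n Sm) + hval n g := by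
      unfold hval cS
      rw [e1, e2]
      ring
    rw [hfx, hvalf]
    linarith

lemma abs_d (S : Finset (Fin n)) (p : Fin n × Fin n) :
    |ind S p.1 - ind S p.2| = (ind S p.1 - ind S p.2)^2 := by
  unfold ind; split_ifs <;> norm_num

/-- forward bound -/
lemma fwd_bound (e : Fin n → (Fin n → ℝ)) (he : ∀ i, e i = Pi.single i 1)
    (a : Fin n → ℝ) (b : Fin n → Fin n → ℝ)
    (ha : ∀ i, a i ∈ Set.Icc (-1 : ℝ) 1) (hb : ∀ i j, b i j ∈ Set.Icc (-2 : ℝ) 2)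
    (S : Finset (Fin n)) :
    |∑ j ∈ S, ((∑ i, a i • e i) + ∑ p ∈ pairs n, b p.1 p.2 • (e p.1 - e p.2)) j|
      ≤ cS n S := by
  rw [sum_coords e he]
  have h1 : |∑ i ∈ S, a i| ≤ (S.card : ℝ) := by
    calc |∑ i ∈ S, a i| ≤ ∑ i ∈ S, |a i| := Finset.abs_sum_le_sum_abs _ _
      _ ≤ ∑ _i ∈ S, (1:ℝ) := by
          apply Finset.sum_le_sum
          intro i hi
          exact abs_le.mpr ⟨(ha i).1, (ha i).2⟩
      _ = S.card := by simp
  have h2 : |∑ p ∈ pairs n, b p.1 p.2 * (ind S p.1 - ind S p.2)|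
      ≤ 2 * (S.card * ((n:ℝ) - S.card)) := by
    calc |∑ p ∈ pairs n, b p.1 p.2 * (ind S p.1 - ind S p.2)|
        ≤ ∑ p ∈ pairs n, |b p.1 p.2 * (ind S p.1 - ind S p.2)| :=
          Finset.abs_sum_le_sum_abs _ _
      _ ≤ ∑ p ∈ pairs n, 2 * (ind S p.1 - ind S p.2)^2 := by
          apply Finset.sum_le_sum
          intro p _
          rw [abs_mul, abs_d]
          have hb2 : |b p.1 p.2| ≤ 2 := abs_le.mpr ⟨(hb p.1 p.2).1, (hb p.1 p.2).2⟩
          have hnn : (0:ℝ) ≤ (ind S p.1 - ind S p.2)^2 := sq_nonneg _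
          nlinarith
      _ = 2 * (S.card * ((n:ℝ) - S.card)) := by
          rw [← Finset.mul_sum, count_pairs]
  calc |∑ i ∈ S, a i + ∑ p ∈ pairs n, b p.1 p.2 * (ind S p.1 - ind S p.2)|
      ≤ |∑ i ∈ S, a i| + |∑ p ∈ pairs n, b p.1 p.2 * (ind S p.1 - ind S p.2)| :=
        abs_add_le _ _
    _ ≤ (S.card : ℝ) + 2 * (S.card * ((n:ℝ) - S.card)) := by linarith
    _ = cS n S := by unfold cS; ring

noncomputable def bmax (S : Finset (Fin n)) : Fin n → Fin n → ℝ :=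
  fun i j => 2 * (ind S i - ind S j)

lemma bmax_mem (S : Finset (Fin n)) (i j : Fin n) : bmax S i j ∈ Set.Icc (-2:ℝ) 2 := by
  unfold bmax ind
  rw [Set.mem_Icc]
  split_ifs <;> norm_num

lemma bmax_sum (S : Finset (Fin n)) :
    ∑ p ∈ pairs n, bmax S p.1 p.2 * (ind S p.1 - ind S p.2)
      = 2 * (S.card * ((n:ℝ) - S.card)) := by
  have h : ∀ p ∈ pairs n, bmax S p.1 p.2 * (ind S p.1 - ind S p.2)
      = 2 * (ind S p.1 - ind S p.2)^2 := by
    intro p _; unfold bmax; ring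
  rw [Finset.sum_congr rfl h, ← Finset.mul_sum, count_pairs]

lemma sum_const_S (S : Finset (Fin n)) : ∑ _i ∈ S, (1:ℝ) = S.card := by simp

lemma diff_a (e : Fin n → (Fin n → ℝ)) (i : Fin n) (b : Fin n → Fin n → ℝ) :
    ((∑ k, (1:ℝ) • e k) + ∑ p ∈ pairs n, b p.1 p.2 • (e p.1 - e p.2))
    - ((∑ k, (fun m => if m = i then (-1:ℝ) else 1) k • e k)
        + ∑ p ∈ pairs n, b p.1 p.2 • (e p.1 - e p.2))
    = (2:ℝ) • e i := by
  rw [add_sub_add_right_eq_sub, ← Finset.sum_sub_distrib]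
  simp_rw [← sub_smul]
  rw [Finset.sum_eq_single_of_mem i (Finset.mem_univ i)]
  · rw [if_pos rfl]; norm_num
  · intro k _ hk
    (try dsimp only); rw [if_neg hk, sub_self, zero_smul]

lemma diff_b (e : Fin n → (Fin n → ℝ)) (b : Fin n → Fin n → ℝ) (i j : Fin n)
    (hij : i < j) (hbij : b i j = 0) :
    ((∑ k, (1:ℝ) • e k)
        + ∑ p ∈ pairs n, (fun k l => if k = i ∧ l = j then (2:ℝ) else b k l) p.1 p.2
            • (e p.1 - e p.2))
    - ((∑ k, (1:ℝ) • e k) + ∑ p ∈ pairs n, b p.1 p.2 • (e p.1 - e p.2))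
    = (2:ℝ) • (e i - e j) := by
  rw [add_sub_add_left_eq_sub, ← Finset.sum_sub_distrib]
  simp_rw [← sub_smul]
  rw [Finset.sum_eq_single_of_mem (i,j) (by simp [pairs, hij])]
  · (try dsimp only); rw [if_pos ⟨rfl, rfl⟩, hbij, sub_zero]
  · intro p _ hpne
    (try dsimp only)
    rw [if_neg, sub_self, zero_smul]
    rintro ⟨h1, h2⟩
    exact hpne (Prod.ext h1 h2)

end Stmt17Aux

open Stmt17Aux in
/-- For the Jordan quiver datum (Hilbert scheme of `n` points in `ℂ²`), the
zonotope `Σ̄ ⊂ ℝⁿ` given as the Minkowski sum of the segments `[-eᵢ, eᵢ]` and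
`[2eᵢ - 2eⱼ, 2eⱼ - 2eᵢ]` (`i < j`) has defining inequalities exactly
`|∑_{i∈S} xᵢ| ≤ c_S = |S| + 2|S|(n - |S|)` for all nonempty `S ⊆ {1,…,n}`: `Σ̄` equals the
region cut out by these inequalities, each inequality is attained, and each functional
`∑_{i∈S} xᵢ` is maximized on a facet of `Σ̄`. -/
theorem stmt17 (n : ℕ)
    (e : Fin n → (Fin n → ℝ)) (he : ∀ i, e i = Pi.single i 1)
    (Sig : Set (Fin n → ℝ))
    (hSig : Sig = {x : Fin n → ℝ | ∃ a : Fin n → ℝ, ∃ b : Fin n → Fin n → ℝ,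
      (∀ i, a i ∈ Set.Icc (-1 : ℝ) 1) ∧ (∀ i j, b i j ∈ Set.Icc (-2 : ℝ) 2) ∧
      x = (∑ i, a i • e i) +
        ∑ p ∈ Finset.univ.filter (fun p : Fin n × Fin n => p.1 < p.2),
          b p.1 p.2 • (e p.1 - e p.2)}) :
    (Sig = {x : Fin n → ℝ | ∀ S : Finset (Fin n), S.Nonempty →
      |∑ i ∈ S, x i| ≤ (S.card : ℝ) + 2 * S.card * ((n : ℝ) - S.card)}) ∧
    (∀ S : Finset (Fin n), S.Nonempty →
      ∃ x ∈ Sig, ∑ i ∈ S, x i = (S.card : ℝ) + 2 * S.card * ((n : ℝ) - S.card)) ∧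
    (∀ S : Finset (Fin n), S.Nonempty →
      Module.finrank ℝ (Submodule.span ℝ
        {z : Fin n → ℝ | ∃ x ∈ {y ∈ Sig |
            ∑ i ∈ S, y i = (S.card : ℝ) + 2 * S.card * ((n : ℝ) - S.card)},
          ∃ y ∈ {y ∈ Sig |
            ∑ i ∈ S, y i = (S.card : ℝ) + 2 * S.card * ((n : ℝ) - S.card)},
          z = x - y}) = n - 1) := by
  subst hSig
  rw [← pairs_def]
  set Zon : Set (Fin n → ℝ) := {x : Fin n → ℝ | ∃ a : Fin n → ℝ, ∃ b : Fin n → Fin n → ℝ,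
      (∀ i, a i ∈ Set.Icc (-1 : ℝ) 1) ∧ (∀ i j, b i j ∈ Set.Icc (-2 : ℝ) 2) ∧
      x = (∑ i, a i • e i) +
        ∑ p ∈ pairs n, b p.1 p.2 • (e p.1 - e p.2)} with hZon
  -- forward bound
  have hfwd : ∀ x ∈ Zon, ∀ S : Finset (Fin n), |∑ i ∈ S, x i| ≤ cS n S := by
    rintro x ⟨a, b, ha, hb, rfl⟩ S
    exact fwd_bound e he a b ha hb S
  -- the maximizing point for a given S
  have hmax : ∀ S : Finset (Fin n),
      ∃ y ∈ Zon, (y = (∑ i, (1:ℝ) • e i)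
          + ∑ p ∈ pairs n, bmax S p.1 p.2 • (e p.1 - e p.2))
        ∧ ∑ i ∈ S, y i = cS n S := by
    intro S
    refine ⟨_, ⟨(fun _ => (1:ℝ)), bmax S, fun i => by norm_num, bmax_mem S, rfl⟩, rfl, ?_⟩
    rw [sum_coords e he, bmax_sum, sum_const_S]
    unfold cS; ring
  refine ⟨?_, ?_, ?_⟩
  · -- part 1
    apply Set.eq_of_subset_of_subset
    · intro x hx S _
      exact hfwd x hx S
    · intro x hx
      have hx' : ∀ S : Finset (Fin n), |∑ i ∈ S, x i| ≤ cS n S := by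
        intro S
        rcases S.eq_empty_or_nonempty with rfl | hS
        · simp [cS]
        · exact hx S hS
      by_contra hxZ
      have himg : Zon = (L e) '' (K n) := by
        ext y
        constructor
        · rintro ⟨a, b, ha, hb, rfl⟩
          exact ⟨(a, b), ⟨ha, hb⟩, rfl⟩
        · rintro ⟨⟨a, b⟩, ⟨ha, hb⟩, rfl⟩
          exact ⟨a, b, ha, hb, rfl⟩
      have hconv : Convex ℝ Zon := himg ▸ (K_convex.linear_image (L e))
      have hclosed : IsClosed Zon := by
        rw [himg]
        exact ((K_compact).image (L e).continuous_of_finiteDimensional).isClosed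
      obtain ⟨φ, u, hφs, hφx⟩ := geometric_hahn_banach_closed_point hconv hclosed hxZ
      set A : Fin n → ℝ := fun i => if 0 ≤ φ (e i) then 1 else -1 with hA
      set B : Fin n → Fin n → ℝ :=
        fun i j => if 0 ≤ φ (e i) - φ (e j) then 2 else -2 with hB
      have hAmem : ∀ i, A i ∈ Set.Icc (-1:ℝ) 1 := by
        intro i; rw [hA]; (try dsimp only); rw [Set.mem_Icc]; split_ifs <;> norm_num
      have hBmem : ∀ i j, B i j ∈ Set.Icc (-2:ℝ) 2 := by
        intro i j; rw [hB]; (try dsimp only); rw [Set.mem_Icc]; split_ifs <;> norm_num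
      set yv : Fin n → ℝ := (∑ i, A i • e i)
        + ∑ p ∈ pairs n, B p.1 p.2 • (e p.1 - e p.2) with hyv
      have hymem : yv ∈ Zon := ⟨A, B, hAmem, hBmem, rfl⟩
      have hφy : φ yv = hval n (fun i => φ (e i)) := by
        rw [hyv, map_add, map_sum, map_sum]
        unfold hval
        (try dsimp only)
        congr 1
        · apply Finset.sum_congr rfl
          intro i _
          rw [map_smul, smul_eq_mul, hA]
          (try dsimp only)
          by_cases h : 0 ≤ φ (e i)
          · rw [if_pos h, abs_of_nonneg h, one_mul]
          · rw [if_neg h, abs_of_neg (lt_of_not_ge h)]; ring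
        · apply Finset.sum_congr rfl
          intro p _
          rw [map_smul, map_sub, smul_eq_mul, hB]
          (try dsimp only)
          by_cases h : 0 ≤ φ (e p.1) - φ (e p.2)
          · rw [if_pos h, abs_of_nonneg h]
          · rw [if_neg h, abs_of_neg (lt_of_not_ge h)]; ring
      have hφx2 : φ x = ∑ i, φ (e i) * x i := by
        conv_lhs => rw [rep e he x]
        rw [map_sum]
        apply Finset.sum_congr rfl
        intro i _
        rw [map_smul, smul_eq_mul, mul_comm]
      have hk : ∑ i, φ (e i) * x i ≤ hval n (fun i => φ (e i)) :=
        keylem x hx' (fun i => φ (e i))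
      have h1 := hφs yv hymem
      rw [hφy] at h1
      rw [hφx2] at hφx
      linarith
  · -- part 2
    intro S _
    obtain ⟨y, hyZ, _, hysum⟩ := hmax S
    exact ⟨y, hyZ, hysum⟩
  · -- part 3
    intro S hS
    obtain ⟨i₀, hi₀⟩ := hS
    obtain ⟨y₀, hy₀Z, hy₀eq, hy₀sum⟩ := hmax S
    set Fc : Set (Fin n → ℝ) :=
      {y ∈ Zon | ∑ i ∈ S, y i = (S.card : ℝ) + 2 * S.card * ((n : ℝ) - S.card)} with hFc
    have hy₀F : y₀ ∈ Fc := ⟨hy₀Z, hy₀sum⟩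
    set φS : (Fin n → ℝ) →ₗ[ℝ] ℝ := ∑ i ∈ S, LinearMap.proj i with hφS
    have hφSapp : ∀ v : Fin n → ℝ, φS v = ∑ i ∈ S, v i := by
      intro v
      rw [hφS]
      simp [LinearMap.sum_apply, LinearMap.proj_apply]
    set V := Submodule.span ℝ
      {z : Fin n → ℝ | ∃ x ∈ Fc, ∃ y ∈ Fc, z = x - y} with hV
    -- generators
    have hgen1 : ∀ i, i ∉ S → e i ∈ V := by
      intro i hiS
      set A' : Fin n → ℝ := fun m => if m = i then (-1:ℝ) else 1 with hA'
      set y' : Fin n → ℝ := (∑ k, A' k • e k)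
        + ∑ p ∈ pairs n, bmax S p.1 p.2 • (e p.1 - e p.2) with hy'
      have hy'Z : y' ∈ Zon := by
        refine ⟨A', bmax S, ?_, bmax_mem S, rfl⟩
        intro k; rw [hA']; (try dsimp only); rw [Set.mem_Icc]; split_ifs <;> norm_num
      have hy'F : y' ∈ Fc := by
        refine ⟨hy'Z, ?_⟩
        rw [hy', sum_coords e he, bmax_sum]
        have : ∑ k ∈ S, A' k = (S.card : ℝ) := by
          rw [← sum_const_S S]
          apply Finset.sum_congr rfl
          intro k hk
          rw [hA']; (try dsimp only)
          rw [if_neg]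
          rintro rfl
          exact hiS hk
        rw [this]; ring
      have hdiff : y₀ - y' = (2:ℝ) • e i := by
        rw [hy₀eq, hy']
        exact diff_a e i (bmax S)
      have hmem2 : y₀ - y' ∈ V := Submodule.subset_span ⟨y₀, hy₀F, y', hy'F, rfl⟩
      have : ((2:ℝ)⁻¹) • (y₀ - y') = e i := by
        rw [hdiff, smul_smul]; norm_num
      rw [← this]
      exact Submodule.smul_mem V _ hmem2
    have hgen2 : ∀ i j : Fin n, i ∈ S → j ∈ S → i < j → e i - e j ∈ V := by
      intro i j hiS hjS hij
      have hbij0 : bmax S i j = 0 := by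
        unfold bmax ind; rw [if_pos hiS, if_pos hjS]; ring
      set B' : Fin n → Fin n → ℝ :=
        fun k l => if k = i ∧ l = j then (2:ℝ) else bmax S k l with hB'
      set y'' : Fin n → ℝ := (∑ k, (1:ℝ) • e k)
        + ∑ p ∈ pairs n, B' p.1 p.2 • (e p.1 - e p.2) with hy''
      have hy''Z : y'' ∈ Zon := by
        refine ⟨(fun _ => (1:ℝ)), B', fun k => by norm_num, ?_, rfl⟩
        intro k l; rw [hB']; (try dsimp only)
        split_ifs with h
        · rw [Set.mem_Icc]; norm_num
        · exact bmax_mem S k l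
      have hy''F : y'' ∈ Fc := by
        refine ⟨hy''Z, ?_⟩
        rw [hy'', sum_coords e he, sum_const_S]
        have hsame : ∑ p ∈ pairs n, B' p.1 p.2 * (ind S p.1 - ind S p.2)
            = ∑ p ∈ pairs n, bmax S p.1 p.2 * (ind S p.1 - ind S p.2) := by
          apply Finset.sum_congr rfl
          intro p _
          rw [hB']; (try dsimp only)
          split_ifs with h
          · obtain ⟨h1, h2⟩ := h
            rw [h1, h2, hbij0]
            unfold ind
            rw [if_pos hiS, if_pos hjS]
            ring
          · rfl
        rw [hsame, bmax_sum]
        ring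
      have hdiff : y'' - y₀ = (2:ℝ) • (e i - e j) := by
        rw [hy'', hy₀eq, hB']
        exact diff_b e (bmax S) i j hij hbij0
      have hmem2 : y'' - y₀ ∈ V := Submodule.subset_span ⟨y'', hy''F, y₀, hy₀F, rfl⟩
      have : ((2:ℝ)⁻¹) • (y'' - y₀) = e i - e j := by
        rw [hdiff, smul_smul]; norm_num
      rw [← this]
      exact Submodule.smul_mem V _ hmem2
    have hgen2' : ∀ i j : Fin n, i ∈ S → j ∈ S → i ≠ j → e i - e j ∈ V := by
      intro i j hiS hjS hne
      rcases lt_or_gt_of_ne hne with h | h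
      · exact hgen2 i j hiS hjS h
      · have := Submodule.neg_mem V (hgen2 j i hjS hiS h)
        rwa [neg_sub] at this
    have hVK : V = LinearMap.ker φS := by
      apply le_antisymm
      · rw [hV]
        apply Submodule.span_le.mpr
        rintro z ⟨xx, ⟨_, hxs⟩, yy, ⟨_, hys⟩, rfl⟩
        rw [SetLike.mem_coe, LinearMap.mem_ker, map_sub, hφSapp, hφSapp, hxs, hys, sub_self]
      · intro z hz
        rw [LinearMap.mem_ker, hφSapp] at hz
        have h0 : ∑ i ∈ S, z i • (e i - e i₀) = ∑ i ∈ S, z i • e i := by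
          simp_rw [smul_sub]
          rw [Finset.sum_sub_distrib, ← Finset.sum_smul, hz, zero_smul, sub_zero]
        have hzeq : z = (∑ i ∈ Sᶜ, z i • e i) + ∑ i ∈ S, z i • (e i - e i₀) := by
          rw [h0, add_comm, Finset.sum_add_sum_compl]
          exact rep e he z
        rw [hzeq]
        apply Submodule.add_mem
        · apply Submodule.sum_mem
          intro i hi
          have hiS : i ∉ S := Finset.mem_compl.mp hi
          exact Submodule.smul_mem V _ (hgen1 i hiS)
        · apply Submodule.sum_mem
          intro i hi
          by_cases h : i = i₀
          · rw [h, sub_self, smul_zero]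
            exact Submodule.zero_mem V
          · exact Submodule.smul_mem V _ (hgen2' i i₀ hi hi₀ h)
    have hsurj : LinearMap.range φS = ⊤ := by
      rw [LinearMap.range_eq_top]
      intro r
      refine ⟨r • e i₀, ?_⟩
      rw [hφSapp]
      have : ∀ i : Fin n, (r • e i₀) i = r * e i₀ i := fun i => rfl
      simp_rw [this]
      rw [← Finset.mul_sum, sum_e_mem e he]
      unfold ind
      rw [if_pos hi₀, mul_one]
    have hrk := LinearMap.finrank_range_add_finrank_ker φS
    rw [hsurj, finrank_top, Module.finrank_self, Module.finrank_pi, Fintype.card_fin] at hrk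
    rw [hVK]
    omega
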